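/- For any symmetric-parametrization list 𝒫 and any natural number k, one has M(𝒫)^{2^k − 1}·M(𝒫⁺) ≤ M((𝒫^{−^k})⁺) ≤ M(𝒫⁺)^{2^k}, where 𝒫^{−^k} denotes the k-fold minus transform. -/
import Mathlib


open Finset
open scoped Classical

noncomputable section

/-- The value `M(P) = ∑ v, μ v * |θ v|` of a symmetric-parametrization list
`P = ((μ v, θ v))_v`. -/
def Mval {V : Type*} [Fintype V] (μ θ : V → ℝ) : ℝ := ∑ v, μ v * |θ v|

/-- Weights of the minus transform `P⁻`. -/
def minusμ {V : Type*} (μ : V → ℝ) : V × V → ℝ := fun p => μ p.1 * μ p.2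

/-- Parameters of the minus transform `P⁻`. -/
def minusθ {V : Type*} (θ : V → ℝ) : V × V → ℝ := fun p => θ p.1 * θ p.2

/-- The sign `∓ᵤ` : `-1` when `u = 1` (`true`), `+1` when `u = 0` (`false`). -/
def sgn : Bool → ℝ := fun u => if u then -1 else 1

/-- Weights of the plus transform `P⁺`
(when `1 ∓ᵤ θ₀ θ₁ = 0` the formula yields `0`, matching the convention that the
entry is then `(0, 0)`). -/
def plusμ {V : Type*} (μ θ : V → ℝ) : Bool × V × V → ℝ :=
  fun p => μ p.2.1 * μ p.2.2 * (1 + sgn p.1 * (θ p.2.1 * θ p.2.2)) / 2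

/-- Parameters of the plus transform `P⁺`
(division by zero is `0` in Lean, matching the convention that the entry is
`(0, 0)` when `1 ∓ᵤ θ₀ θ₁ = 0`). -/
def plusθ {V : Type*} (θ : V → ℝ) : Bool × V × V → ℝ :=
  fun p => (θ p.2.2 + sgn p.1 * θ p.2.1) / (1 + sgn p.1 * (θ p.2.1 * θ p.2.2))

/-- Index type of the `k`-fold minus transform. -/
def iterIdx (V : Type*) : ℕ → Type _ := fun k => Nat.rec V (fun _ T => T × T) k

instance iterIdxFintype (V : Type*) [Fintype V] : ∀ k, Fintype (iterIdx V k)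
  | 0 => inferInstanceAs (Fintype V)
  | (k+1) => letI := iterIdxFintype V k
             inferInstanceAs (Fintype (iterIdx V k × iterIdx V k))

/-- Weights of the `k`-fold minus transform `P^{-^k}`. -/
def iterMinusμ {V : Type*} (μ : V → ℝ) : (k : ℕ) → iterIdx V k → ℝ
  | 0 => μ
  | (k+1) => minusμ (iterMinusμ μ k)

/-- Parameters of the `k`-fold minus transform `P^{-^k}`. -/
def iterMinusθ {V : Type*} (θ : V → ℝ) : (k : ℕ) → iterIdx V k → ℝ
  | 0 => θ
  | (k+1) => minusθ (iterMinusθ θ k)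

/-! ### Auxiliary definitions and lemmas -/

/-- `S(m, t) = ∑ w, m w * t w`. -/
def Sval' {W : Type*} [Fintype W] (m t : W → ℝ) : ℝ := ∑ w, m w * t w

/-- `G(m, t) = ∑ (w₀, w₁), m w₀ * m w₁ * max (t w₀) (t w₁)`. -/
def Gval' {W : Type*} [Fintype W] (m t : W → ℝ) : ℝ :=
  ∑ p : W × W, m p.1 * m p.2 * max (t p.1) (t p.2)

/-- `((a,b),(c,d)) ↦ ((a,c),(b,d))`. -/
def eQ {W : Type*} : ((W × W) × W × W) ≃ ((W × W) × W × W) :=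
  ⟨fun p => ((p.1.1, p.2.1), (p.1.2, p.2.2)), fun p => ((p.1.1, p.2.1), (p.1.2, p.2.2)),
   fun _ => rfl, fun _ => rfl⟩

/-- `((a,b),(c,d)) ↦ ((c,b),(a,d))`. -/
def eS {W : Type*} : ((W × W) × W × W) ≃ ((W × W) × W × W) :=
  ⟨fun p => ((p.2.1, p.1.2), (p.1.1, p.2.2)), fun p => ((p.2.1, p.1.2), (p.1.1, p.2.2)),
   fun _ => rfl, fun _ => rfl⟩

lemma sum_prod_mul {α β : Type*} [Fintype α] [Fintype β] (f : α → ℝ) (g : β → ℝ) :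
    ∑ p : α × β, f p.1 * g p.2 = (∑ a, f a) * (∑ b, g b) := by
  rw [Fintype.sum_prod_type, ← Finset.sum_mul_sum]

lemma maxkey1 {a b c d : ℝ} :
    (a + c) * max b d ≤ max (a*b) (c*d) + max (c*b) (a*d) := by
  rcases le_total b d with h|h
  · rw [max_eq_right h]
    have h1 : c*d ≤ max (a*b) (c*d) := le_max_right _ _
    have h2 : a*d ≤ max (c*b) (a*d) := le_max_right _ _
    nlinarith
  · rw [max_eq_left h]
    have h1 : a*b ≤ max (a*b) (c*d) := le_max_left _ _
    have h2 : c*b ≤ max (c*b) (a*d) := le_max_left _ _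
    nlinarith

lemma maxkey2 {a b c d : ℝ} (ha : 0 ≤ a) (hb : 0 ≤ b) (hd : 0 ≤ d) :
    max (a*b) (c*d) ≤ max a c * max b d := by
  apply max_le
  · exact mul_le_mul (le_max_left _ _) (le_max_left _ _) hb (le_trans ha (le_max_left _ _))
  · exact mul_le_mul (le_max_right _ _) (le_max_right _ _) hd (le_trans ha (le_max_left _ _))

lemma Gval'_nonneg {W : Type*} [Fintype W] {m t : W → ℝ}
    (hm : ∀ w, 0 ≤ m w) (ht : ∀ w, 0 ≤ t w) : 0 ≤ Gval' m t :=
  Finset.sum_nonneg fun _ _ =>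
    mul_nonneg (mul_nonneg (hm _) (hm _)) (le_trans (ht _) (le_max_left _ _))

lemma Gval'_minus_le {W : Type*} [Fintype W] {m t : W → ℝ}
    (hm : ∀ w, 0 ≤ m w) (ht : ∀ w, 0 ≤ t w) :
    Gval' (fun p : W × W => m p.1 * m p.2) (fun p : W × W => t p.1 * t p.2)
      ≤ Gval' m t * Gval' m t := by
  have hrw : Gval' m t * Gval' m t
      = ∑ p : (W × W) × W × W,
          (m p.1.1 * m p.1.2 * max (t p.1.1) (t p.1.2)) *
          (m p.2.1 * m p.2.2 * max (t p.2.1) (t p.2.2)) :=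
    (sum_prod_mul (fun q : W × W => m q.1 * m q.2 * max (t q.1) (t q.2))
      (fun q : W × W => m q.1 * m q.2 * max (t q.1) (t q.2))).symm
  rw [hrw, ← Equiv.sum_comp (eQ (W := W)) (fun p : (W × W) × W × W =>
    (m p.1.1 * m p.1.2 * max (t p.1.1) (t p.1.2)) *
    (m p.2.1 * m p.2.2 * max (t p.2.1) (t p.2.2)))]
  apply Finset.sum_le_sum
  rintro ⟨⟨a,b⟩,⟨c,d⟩⟩ -
  simp only [eQ, Equiv.coe_fn_mk]
  show m a * m b * (m c * m d) * max (t a * t b) (t c * t d)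
      ≤ (m a * m c * max (t a) (t c)) * (m b * m d * max (t b) (t d))
  have key := maxkey2 (a := t a) (b := t b) (c := t c) (d := t d) (ht a) (ht b) (ht d)
  have hw : (0:ℝ) ≤ m a * m b * (m c * m d) :=
    mul_nonneg (mul_nonneg (hm a) (hm b)) (mul_nonneg (hm c) (hm d))
  calc m a * m b * (m c * m d) * max (t a * t b) (t c * t d)
      ≤ m a * m b * (m c * m d) * (max (t a) (t c) * max (t b) (t d)) :=
        mul_le_mul_of_nonneg_left key hw
    _ = (m a * m c * max (t a) (t c)) * (m b * m d * max (t b) (t d)) := by ring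

lemma Gval'_minus_ge {W : Type*} [Fintype W] {m t : W → ℝ}
    (hm : ∀ w, 0 ≤ m w) (hs : ∑ w, m w = 1) :
    Sval' m t * Gval' m t
      ≤ Gval' (fun p : W × W => m p.1 * m p.2) (fun p : W × W => t p.1 * t p.2) := by
  set F : (W × W) × W × W → ℝ := fun p =>
    m p.1.1 * m p.1.2 * (m p.2.1 * m p.2.2) * max (t p.1.1 * t p.1.2) (t p.2.1 * t p.2.2) with hF
  have hG : Gval' (fun p : W × W => m p.1 * m p.2) (fun p : W × W => t p.1 * t p.2)
      = ∑ p : (W × W) × W × W, F p := rfl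
  have h2 : 2 * ∑ p : (W × W) × W × W, F p = ∑ p : (W × W) × W × W, (F p + F (eS p)) := by
    rw [Finset.sum_add_distrib, Equiv.sum_comp eS F]; ring
  have hlow : ∑ p : (W × W) × W × W,
      m p.1.1 * m p.1.2 * (m p.2.1 * m p.2.2) * ((t p.1.1 + t p.2.1) * max (t p.1.2) (t p.2.2))
      ≤ ∑ p : (W × W) × W × W, (F p + F (eS p)) := by
    apply Finset.sum_le_sum
    rintro ⟨⟨a,b⟩,⟨c,d⟩⟩ -
    simp only [hF, eS, Equiv.coe_fn_mk]
    show m a * m b * (m c * m d) * ((t a + t c) * max (t b) (t d))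
        ≤ m a * m b * (m c * m d) * max (t a * t b) (t c * t d)
          + m c * m b * (m a * m d) * max (t c * t b) (t a * t d)
    have hw : (0:ℝ) ≤ m a * m b * (m c * m d) :=
      mul_nonneg (mul_nonneg (hm a) (hm b)) (mul_nonneg (hm c) (hm d))
    have key := maxkey1 (a := t a) (b := t b) (c := t c) (d := t d)
    calc m a * m b * (m c * m d) * ((t a + t c) * max (t b) (t d))
        ≤ m a * m b * (m c * m d) * (max (t a * t b) (t c * t d) + max (t c * t b) (t a * t d)) :=
          mul_le_mul_of_nonneg_left key hw
      _ = _ := by ring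
  have hcomp : ∑ p : (W × W) × W × W,
      m p.1.1 * m p.1.2 * (m p.2.1 * m p.2.2) * ((t p.1.1 + t p.2.1) * max (t p.1.2) (t p.2.2))
      = 2 * (Sval' m t * Gval' m t) := by
    have expand : ∀ p : (W × W) × W × W,
        m p.1.1 * m p.1.2 * (m p.2.1 * m p.2.2) * ((t p.1.1 + t p.2.1) * max (t p.1.2) (t p.2.2))
        = (fun q : W × W => m q.1 * t q.1 * m q.2) (eQ p).1
            * (fun q : W × W => m q.1 * m q.2 * max (t q.1) (t q.2)) (eQ p).2
          + (fun q : W × W => m q.1 * (m q.2 * t q.2)) (eQ p).1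
            * (fun q : W × W => m q.1 * m q.2 * max (t q.1) (t q.2)) (eQ p).2 := by
      rintro ⟨⟨a,b⟩,⟨c,d⟩⟩
      simp only [eQ, Equiv.coe_fn_mk]
      ring
    simp_rw [expand]
    rw [Finset.sum_add_distrib,
      Equiv.sum_comp (eQ (W := W)) (fun p : (W × W) × W × W =>
        (fun q : W × W => m q.1 * t q.1 * m q.2) p.1
          * (fun q : W × W => m q.1 * m q.2 * max (t q.1) (t q.2)) p.2),
      Equiv.sum_comp (eQ (W := W)) (fun p : (W × W) × W × W =>
        (fun q : W × W => m q.1 * (m q.2 * t q.2)) p.1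
          * (fun q : W × W => m q.1 * m q.2 * max (t q.1) (t q.2)) p.2),
      sum_prod_mul (fun q : W × W => m q.1 * t q.1 * m q.2)
        (fun q : W × W => m q.1 * m q.2 * max (t q.1) (t q.2)),
      sum_prod_mul (fun q : W × W => m q.1 * (m q.2 * t q.2))
        (fun q : W × W => m q.1 * m q.2 * max (t q.1) (t q.2))]
    have hA : ∑ q : W × W, m q.1 * t q.1 * m q.2 = Sval' m t := by
      rw [show (fun q : W × W => m q.1 * t q.1 * m q.2)
          = (fun q : W × W => (fun w => m w * t w) q.1 * m q.2) from rfl,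
        sum_prod_mul (fun w => m w * t w) m, hs, mul_one]; rfl
    have hB : ∑ q : W × W, m q.1 * (m q.2 * t q.2) = Sval' m t := by
      rw [sum_prod_mul m (fun w => m w * t w), hs, one_mul]; rfl
    rw [hA, hB]
    show Sval' m t * Gval' m t + Sval' m t * Gval' m t = _
    ring
  rw [hG]
  linarith [hlow.trans_eq h2.symm, hcomp]

lemma abskey (a b : ℝ) : |a + b| + |a - b| = 2 * max |a| |b| := by
  rcases abs_cases (a+b) with ⟨h1,_⟩|⟨h1,_⟩ <;>
  rcases abs_cases (a-b) with ⟨h2,_⟩|⟨h2,_⟩ <;>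
  rcases max_cases |a| |b| with ⟨h3,h4⟩|⟨h3,h4⟩ <;>
  rcases abs_cases a with ⟨h5,_⟩|⟨h5,_⟩ <;>
  rcases abs_cases b with ⟨h6,_⟩|⟨h6,_⟩ <;>
  linarith

lemma halfabs {d n : ℝ} (hd : 0 ≤ d) (h0 : d = 0 → n = 0) : d * |n / d| = |n| := by
  rcases eq_or_lt_of_le hd with h|h
  · rw [← h, h0 h.symm]; simp
  · rw [abs_div, abs_of_pos h]; field_simp

lemma plus_term {x y : ℝ} (hx : |x| ≤ 1) (hy : |y| ≤ 1) (s : ℝ) (hs : s = 1 ∨ s = -1) :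
    (1 + s * (x * y)) * |(y + s * x) / (1 + s * (x * y))| = |y + s * x| := by
  obtain ⟨hx1, hx2⟩ := abs_le.mp hx
  obtain ⟨hy1, hy2⟩ := abs_le.mp hy
  apply halfabs
  · rcases hs with rfl|rfl <;> nlinarith
  · intro h
    have h2 : (y + s * x) ^ 2 ≤ 0 := by rcases hs with rfl|rfl <;> nlinarith
    have h3 : (y + s * x) ^ 2 = 0 := le_antisymm h2 (sq_nonneg _)
    exact (pow_eq_zero_iff two_ne_zero).mp h3

/-- `M(P⁺) = ∑_{v₀,v₁} μ₀ μ₁ max(|θ₀|,|θ₁|)`. -/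
lemma plus_Gval {W : Type*} [Fintype W] (μ θ : W → ℝ) (hθ : ∀ w, |θ w| ≤ 1) :
    Mval (plusμ μ θ) (plusθ θ) = Gval' μ (fun w => |θ w|) := by
  rw [Mval, Fintype.sum_prod_type, Fintype.sum_bool, ← Finset.sum_add_distrib, Gval']
  apply Finset.sum_congr rfl
  rintro ⟨a,b⟩ -
  show plusμ μ θ (true, a, b) * |plusθ θ (true, a, b)|
      + plusμ μ θ (false, a, b) * |plusθ θ (false, a, b)|
      = μ a * μ b * max |θ a| |θ b|
  simp only [plusμ, plusθ, sgn, if_pos, if_neg, Bool.false_eq_true, not_false_iff, ite_true,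
    ite_false]
  have h1 := plus_term (hθ a) (hθ b) (-1) (Or.inr rfl)
  have h2 := plus_term (hθ a) (hθ b) 1 (Or.inl rfl)
  have hmax := abskey (θ b) (θ a)
  have e1 : μ a * μ b * (1 + (-1) * (θ a * θ b)) / 2 * |(θ b + (-1) * θ a) / (1 + (-1) * (θ a * θ b))|
      = μ a * μ b * |θ b + (-1) * θ a| / 2 := by
    rw [show μ a * μ b * (1 + (-1) * (θ a * θ b)) / 2 * |(θ b + (-1) * θ a) / (1 + (-1) * (θ a * θ b))|
        = μ a * μ b * ((1 + (-1) * (θ a * θ b)) * |(θ b + (-1) * θ a) / (1 + (-1) * (θ a * θ b))|) / 2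
      from by ring, h1]
  have e2 : μ a * μ b * (1 + 1 * (θ a * θ b)) / 2 * |(θ b + 1 * θ a) / (1 + 1 * (θ a * θ b))|
      = μ a * μ b * |θ b + 1 * θ a| / 2 := by
    rw [show μ a * μ b * (1 + 1 * (θ a * θ b)) / 2 * |(θ b + 1 * θ a) / (1 + 1 * (θ a * θ b))|
        = μ a * μ b * ((1 + 1 * (θ a * θ b)) * |(θ b + 1 * θ a) / (1 + 1 * (θ a * θ b))|) / 2
      from by ring, h2]
  rw [e1, e2]
  have r1 : |θ b + (-1) * θ a| = |θ b - θ a| := by ring_nf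
  have r2 : |θ b + 1 * θ a| = |θ b + θ a| := by ring_nf
  rw [r1, r2, max_comm |θ a| |θ b|]
  linear_combination (μ a * μ b / 2) * hmax

lemma iterMinusμ_nonneg {V : Type*} (μ : V → ℝ) (hμ : ∀ v, 0 ≤ μ v) :
    ∀ k, ∀ w, 0 ≤ iterMinusμ μ k w := by
  intro k
  induction k with
  | zero => exact hμ
  | succ k ih => exact fun w => mul_nonneg (ih w.1) (ih w.2)

lemma iterMinusθ_abs {V : Type*} (θ : V → ℝ) (hθ : ∀ v, |θ v| ≤ 1) :
    ∀ k, ∀ w, |iterMinusθ θ k w| ≤ 1 := by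
  intro k
  induction k with
  | zero => exact hθ
  | succ k ih =>
    intro w
    show |iterMinusθ θ k w.1 * iterMinusθ θ k w.2| ≤ 1
    rw [abs_mul]
    exact mul_le_one₀ (ih w.1) (abs_nonneg _) (ih w.2)

lemma iterMinusμ_sum {V : Type*} [Fintype V] (μ : V → ℝ) (hsum : ∑ v, μ v = 1) :
    ∀ k, ∑ w, iterMinusμ μ k w = 1 := by
  intro k
  induction k with
  | zero => exact hsum
  | succ k ih =>
    show ∑ w : iterIdx V k × iterIdx V k, iterMinusμ μ k w.1 * iterMinusμ μ k w.2 = 1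
    rw [sum_prod_mul (iterMinusμ μ k) (iterMinusμ μ k), ih, mul_one]

lemma iterMval {V : Type*} [Fintype V] (μ θ : V → ℝ) :
    ∀ k, Mval (iterMinusμ μ k) (iterMinusθ θ k) = Mval μ θ ^ 2 ^ k := by
  intro k
  induction k with
  | zero => rw [pow_zero, pow_one]; rfl
  | succ k ih =>
    show ∑ p : iterIdx V k × iterIdx V k,
        (iterMinusμ μ k p.1 * iterMinusμ μ k p.2) * |iterMinusθ θ k p.1 * iterMinusθ θ k p.2|
        = Mval μ θ ^ 2 ^ (k+1)
    have he : ∀ p : iterIdx V k × iterIdx V k,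
        (iterMinusμ μ k p.1 * iterMinusμ μ k p.2) * |iterMinusθ θ k p.1 * iterMinusθ θ k p.2|
        = (fun w => iterMinusμ μ k w * |iterMinusθ θ k w|) p.1
          * (fun w => iterMinusμ μ k w * |iterMinusθ θ k w|) p.2 := by
      intro p; rw [abs_mul]; ring
    rw [Finset.sum_congr rfl (fun p _ => he p),
      sum_prod_mul (fun w => iterMinusμ μ k w * |iterMinusθ θ k w|)
        (fun w => iterMinusμ μ k w * |iterMinusθ θ k w|)]
    show Mval (iterMinusμ μ k) (iterMinusθ θ k) * Mval (iterMinusμ μ k) (iterMinusθ θ k) = _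
    rw [ih, ← pow_add, pow_succ 2 k, Nat.mul_two]

theorem stmt15 {V : Type*} [Fintype V] (μ θ : V → ℝ)
    (hμ : ∀ v, 0 ≤ μ v) (hsum : ∑ v, μ v = 1) (hθ : ∀ v, θ v ∈ Set.Icc (-1 : ℝ) 1) (k : ℕ) :
    Mval μ θ ^ (2 ^ k - 1) * Mval (plusμ μ θ) (plusθ θ)
      ≤ Mval (plusμ (iterMinusμ μ k) (iterMinusθ θ k)) (plusθ (iterMinusθ θ k))
    ∧ Mval (plusμ (iterMinusμ μ k) (iterMinusθ θ k)) (plusθ (iterMinusθ θ k))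
      ≤ (Mval (plusμ μ θ) (plusθ θ)) ^ (2 ^ k) := by
  have hθ1 : ∀ v, |θ v| ≤ 1 := fun v => abs_le.mpr ⟨(hθ v).1, (hθ v).2⟩
  have hμk := iterMinusμ_nonneg μ hμ
  have hθk := iterMinusθ_abs θ hθ1
  have hsk := iterMinusμ_sum μ hsum
  have hMk := iterMval μ θ
  have hM0 : 0 ≤ Mval μ θ := Finset.sum_nonneg fun v _ => mul_nonneg (hμ v) (abs_nonneg _)
  have hA : ∀ k, Mval (plusμ (iterMinusμ μ k) (iterMinusθ θ k)) (plusθ (iterMinusθ θ k))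
      = Gval' (iterMinusμ μ k) (fun w => |iterMinusθ θ k w|) :=
    fun k => plus_Gval _ _ (hθk k)
  have hA0 : Mval (plusμ μ θ) (plusθ θ) = Gval' μ (fun v => |θ v|) := plus_Gval μ θ hθ1
  have hG0 : 0 ≤ Gval' μ (fun v => |θ v|) := Gval'_nonneg hμ (fun _ => abs_nonneg _)
  have hGk : ∀ k, 0 ≤ Gval' (iterMinusμ μ k) (fun w => |iterMinusθ θ k w|) :=
    fun k => Gval'_nonneg (hμk k) (fun _ => abs_nonneg _)
  rw [hA k, hA0]
  induction k with
  | zero =>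
    constructor
    · rw [show (2:ℕ) ^ 0 - 1 = 0 from rfl, pow_zero, one_mul]
      exact le_of_eq rfl
    · rw [pow_zero, pow_one]
      exact le_of_eq rfl
  | succ k ih =>
    obtain ⟨ih1, ih2⟩ := ih
    have hstep : Gval' (iterMinusμ μ (k+1)) (fun w => |iterMinusθ θ (k+1) w|)
        = Gval' (W := iterIdx V k × iterIdx V k)
            (fun p => iterMinusμ μ k p.1 * iterMinusμ μ k p.2)
            (fun p => |iterMinusθ θ k p.1| * |iterMinusθ θ k p.2|) := by
      have h2 : (fun w : iterIdx V k × iterIdx V k => |iterMinusθ θ (k+1) w|)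
          = fun p : iterIdx V k × iterIdx V k => |iterMinusθ θ k p.1| * |iterMinusθ θ k p.2| :=
        funext fun p => abs_mul _ _
      show Gval' (W := iterIdx V k × iterIdx V k)
          (fun p => iterMinusμ μ k p.1 * iterMinusμ μ k p.2)
          (fun w : iterIdx V k × iterIdx V k => |iterMinusθ θ (k+1) w|) = _
      rw [h2]
    rw [hstep]
    have hup : Gval' (W := iterIdx V k × iterIdx V k)
          (fun p => iterMinusμ μ k p.1 * iterMinusμ μ k p.2)
          (fun p => |iterMinusθ θ k p.1| * |iterMinusθ θ k p.2|)
        ≤ Gval' (iterMinusμ μ k) (fun w => |iterMinusθ θ k w|)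
          * Gval' (iterMinusμ μ k) (fun w => |iterMinusθ θ k w|) :=
      Gval'_minus_le (hμk k) (fun _ => abs_nonneg _)
    have hdn : Sval' (iterMinusμ μ k) (fun w => |iterMinusθ θ k w|)
          * Gval' (iterMinusμ μ k) (fun w => |iterMinusθ θ k w|)
        ≤ Gval' (W := iterIdx V k × iterIdx V k)
          (fun p => iterMinusμ μ k p.1 * iterMinusμ μ k p.2)
          (fun p => |iterMinusθ θ k p.1| * |iterMinusθ θ k p.2|) :=
      Gval'_minus_ge (hμk k) (hsk k)
    have hSv : Sval' (iterMinusμ μ k) (fun w => |iterMinusθ θ k w|) = Mval μ θ ^ 2 ^ k := by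
      rw [← hMk k]; rfl
    constructor
    · -- lower bound
      have e1 : Mval μ θ ^ (2 ^ (k+1) - 1) = Mval μ θ ^ (2 ^ k) * Mval μ θ ^ (2 ^ k - 1) := by
        rw [← pow_add]
        congr 1
        have h1 : 1 ≤ 2 ^ k := Nat.one_le_two_pow
        have h2 : (2:ℕ) ^ (k+1) = 2 ^ k + 2 ^ k := by rw [pow_succ, Nat.mul_two]
        omega
      calc Mval μ θ ^ (2 ^ (k+1) - 1) * Gval' μ (fun v => |θ v|)
          = Mval μ θ ^ (2 ^ k) * (Mval μ θ ^ (2 ^ k - 1) * Gval' μ (fun v => |θ v|)) := by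
            rw [e1]; ring
        _ ≤ Mval μ θ ^ (2 ^ k) * Gval' (iterMinusμ μ k) (fun w => |iterMinusθ θ k w|) :=
            mul_le_mul_of_nonneg_left ih1 (pow_nonneg hM0 _)
        _ = Sval' (iterMinusμ μ k) (fun w => |iterMinusθ θ k w|)
              * Gval' (iterMinusμ μ k) (fun w => |iterMinusθ θ k w|) := by rw [hSv]
        _ ≤ _ := hdn
    · -- upper bound
      calc Gval' (W := iterIdx V k × iterIdx V k)
            (fun p => iterMinusμ μ k p.1 * iterMinusμ μ k p.2)
            (fun p => |iterMinusθ θ k p.1| * |iterMinusθ θ k p.2|)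
          ≤ Gval' (iterMinusμ μ k) (fun w => |iterMinusθ θ k w|)
            * Gval' (iterMinusμ μ k) (fun w => |iterMinusθ θ k w|) := hup
        _ ≤ Gval' μ (fun v => |θ v|) ^ (2 ^ k) * Gval' μ (fun v => |θ v|) ^ (2 ^ k) :=
            mul_le_mul ih2 ih2 (hGk k) (pow_nonneg hG0 _)
        _ = Gval' μ (fun v => |θ v|) ^ (2 ^ (k+1)) := by
            rw [← pow_add, pow_succ 2 k, Nat.mul_two]

end
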